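/- arXiv:math/0611873 — 2 statements merged into one kernel-verified Lean document; each statement's English description precedes it below -/
import Mathlib

section
/- Let G be a group with finite symmetric generating set X. Then (G,X) has the asynchronous falsification by fellow traveler property (for some constant) if and only if (G,X) has the synchronous falsification by fellow traveler property (for some constant). Moreover, if (G,X) has the asynchronous falsification by fellow traveler property with constant k ≥ 1, then it has the synchronous falsification by fellow traveler property with constant 4k. -/
section WordMetricPrelude

variable {G : Type*} [Group G]

/-- `w` is a word over the generating set `X`. -/
def IsWord (X : Finset G) (w : List G) : Prop := ∀ x ∈ w, x ∈ X

/-- The path traced out by the word `w`, at time `t`: the product of the first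
`min t w.length` letters of `w`. -/
def wordPath (w : List G) (t : ℕ) : G := (w.take t).prod

/-- The word metric on `G` with respect to `X`: the minimal length of a word
over `X` representing `g⁻¹ * h`. -/
noncomputable def wordDist (X : Finset G) (g h : G) : ℕ :=
  sInf {n : ℕ | ∃ w : List G, IsWord X w ∧ w.length = n ∧ w.prod = g⁻¹ * h}

/-- A word `w` over `X` is geodesic if its length equals the distance from `1`
to the element it represents. -/
def IsGeodesic (X : Finset G) (w : List G) : Prop :=
  IsWord X w ∧ w.length = wordDist X 1 w.prod

/-- Words `w` and `u` synchronously `k`-fellow travel. -/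
def SyncFellowTravel (X : Finset G) (k : ℕ) (w u : List G) : Prop :=
  ∀ t : ℕ, wordDist X (wordPath w t) (wordPath u t) ≤ k

/-- Words `w` and `u` asynchronously `k`-fellow travel: there is a nondecreasing
unbounded reparameterization `φ` with `d(w(t), u(φ t)) ≤ k` for all `t`. -/
def AsyncFellowTravel (X : Finset G) (k : ℕ) (w u : List G) : Prop :=
  ∃ φ : ℕ → ℕ, Monotone φ ∧ (∀ N : ℕ, ∃ t : ℕ, N ≤ φ t) ∧
    ∀ t : ℕ, wordDist X (wordPath w t) (wordPath u (φ t)) ≤ k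

/-- `(G, X)` has the synchronous falsification by fellow traveler property with
constant `k`. -/
def SyncFFTP (X : Finset G) (k : ℕ) : Prop :=
  ∀ w : List G, IsWord X w → ¬ IsGeodesic X w →
    ∃ u : List G, IsWord X u ∧ u.prod = w.prod ∧ u.length < w.length ∧
      SyncFellowTravel X k u w

/-- `(G, X)` has the asynchronous falsification by fellow traveler property with
constant `k`. -/
def AsyncFFTP (X : Finset G) (k : ℕ) : Prop :=
  ∀ w : List G, IsWord X w → ¬ IsGeodesic X w →
    ∃ u : List G, IsWord X u ∧ u.prod = w.prod ∧ u.length < w.length ∧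
      AsyncFellowTravel X k u w

end WordMetricPrelude

section FFTPAux

variable {G : Type*} [Group G] {X : Finset G}

lemma wordDist_le' {g h : G} {w : List G} (hw : IsWord X w) (hp : w.prod = g⁻¹ * h) :
    wordDist X g h ≤ w.length :=
  Nat.sInf_le ⟨w, hw, rfl, hp⟩

lemma exists_rep (hXsym : ∀ x ∈ X, x⁻¹ ∈ X)
    (hXgen : Subgroup.closure (X : Set G) = ⊤) (g : G) :
    ∃ w : List G, IsWord X w ∧ w.prod = g := by
  have hmem : g ∈ Submonoid.closure (X : Set G) := by
    have hg : g ∈ Subgroup.closure (X : Set G) := by rw [hXgen]; trivial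
    refine Subgroup.closure_induction (fun x hx => Submonoid.subset_closure hx)
      (Submonoid.one_mem _) (fun a b _ _ ha hb => Submonoid.mul_mem _ ha hb) ?_ hg
    intro a _ ha
    refine Submonoid.closure_induction (fun x hx => Submonoid.subset_closure (hXsym x hx))
      (by simpa using Submonoid.one_mem _) ?_ ha
    intro a b _ _ ha hb
    rw [mul_inv_rev]; exact Submonoid.mul_mem _ hb ha
  obtain ⟨l, hl, hlp⟩ := Submonoid.exists_list_of_mem_closure hmem
  exact ⟨l, hl, hlp⟩

lemma wordDist_spec (hXsym : ∀ x ∈ X, x⁻¹ ∈ X)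
    (hXgen : Subgroup.closure (X : Set G) = ⊤) (g h : G) :
    ∃ w : List G, IsWord X w ∧ w.length = wordDist X g h ∧ w.prod = g⁻¹ * h := by
  obtain ⟨w, hw, hwp⟩ := exists_rep hXsym hXgen (g⁻¹ * h)
  have hne : {n : ℕ | ∃ w : List G, IsWord X w ∧ w.length = n ∧ w.prod = g⁻¹ * h}.Nonempty :=
    ⟨w.length, w, hw, rfl, hwp⟩
  obtain ⟨u, hu, hul, hup⟩ := Nat.sInf_mem hne
  exact ⟨u, hu, hul, hup⟩

lemma wordDist_symm (hXsym : ∀ x ∈ X, x⁻¹ ∈ X)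
    (hXgen : Subgroup.closure (X : Set G) = ⊤) (g h : G) :
    wordDist X g h = wordDist X h g := by
  have key : ∀ a b : G, wordDist X a b ≤ wordDist X b a := by
    intro a b
    obtain ⟨w, hw, hwl, hwp⟩ := wordDist_spec hXsym hXgen b a
    have : wordDist X a b ≤ ((w.map fun x => x⁻¹).reverse).length := by
      refine wordDist_le' ?_ ?_
      · intro x hx
        simp only [List.mem_reverse, List.mem_map] at hx
        obtain ⟨y, hy, rfl⟩ := hx
        exact hXsym y (hw y hy)
      · rw [← List.prod_inv_reverse, hwp]; group
    simpa [hwl] using this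
  exact le_antisymm (key g h) (key h g)

lemma wordDist_triangle (hXsym : ∀ x ∈ X, x⁻¹ ∈ X)
    (hXgen : Subgroup.closure (X : Set G) = ⊤) (g m h : G) :
    wordDist X g h ≤ wordDist X g m + wordDist X m h := by
  obtain ⟨w1, hw1, hl1, hp1⟩ := wordDist_spec hXsym hXgen g m
  obtain ⟨w2, hw2, hl2, hp2⟩ := wordDist_spec hXsym hXgen m h
  have : wordDist X g h ≤ (w1 ++ w2).length := by
    refine wordDist_le' ?_ ?_
    · intro x hx
      rcases List.mem_append.mp hx with hx | hx
      · exact hw1 x hx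
      · exact hw2 x hx
    · rw [List.prod_append, hp1, hp2]; group
  simpa [hl1, hl2] using this

lemma wordDist_left_inv (a g h : G) : wordDist X (a * g) (a * h) = wordDist X g h := by
  have : (a * g)⁻¹ * (a * h) = g⁻¹ * h := by group
  simp only [wordDist, this]

lemma wordDist_self (g : G) : wordDist X g g = 0 := by
  refine Nat.sInf_eq_zero.mpr (Or.inl ⟨[], ?_, rfl, by simp⟩)
  intro x hx; exact absurd hx List.not_mem_nil

lemma wordPath_sub {w : List G} (hw : IsWord X w) {s t : ℕ} (hst : s ≤ t) :
    wordDist X (wordPath w s) (wordPath w t) ≤ t - s := by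
  have hws : w.take s = (w.take t).take s := by
    rw [List.take_take, min_eq_left hst]
  have hle : wordDist X (wordPath w s) (wordPath w t) ≤ ((w.take t).drop s).length := by
    refine wordDist_le' ?_ ?_
    · intro x hx
      exact hw x (List.mem_of_mem_take (List.mem_of_mem_drop hx))
    · rw [eq_inv_mul_iff_mul_eq]
      show (w.take s).prod * _ = (w.take t).prod
      rw [hws, ← List.prod_append, List.take_append_drop]
  have hlen : ((w.take t).drop s).length ≤ t - s := by
    rw [List.length_drop, List.length_take]
    omega
  omega

lemma wordDist_one_path {w : List G} (hw : IsWord X w) (t : ℕ) :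
    wordDist X 1 (wordPath w t) ≤ t := by
  have := wordPath_sub hw (Nat.zero_le t)
  simpa [wordPath] using this

lemma wordPath_of_length_le {w : List G} {t : ℕ} (h : w.length ≤ t) :
    wordPath w t = w.prod := by
  rw [wordPath, List.take_of_length_le h]

lemma wordPath_take (w : List G) (n t : ℕ) :
    wordPath (w.take n) t = wordPath w (min t n) := by
  rw [wordPath, List.take_take, wordPath]

lemma wordPath_append (l₁ l₂ : List G) (t : ℕ) :
    wordPath (l₁ ++ l₂) t = wordPath l₁ t * wordPath l₂ (t - l₁.length) := by
  rw [wordPath, List.take_append, List.prod_append, wordPath, wordPath]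

lemma wordPath_zero (w : List G) : wordPath w 0 = 1 := by simp [wordPath]

lemma sync_of_async (hXsym : ∀ x ∈ X, x⁻¹ ∈ X)
    (hXgen : Subgroup.closure (X : Set G) = ⊤)
    {k : ℕ} (hk : 1 ≤ k) (H : AsyncFFTP X k) : SyncFFTP X (4 * k) := by
  classical
  intro w hw hng
  have dsym := wordDist_symm hXsym hXgen (X := X)
  have dtri := wordDist_triangle hXsym hXgen (X := X)
  have hex : ∃ t, ¬ IsGeodesic X (w.take t) := ⟨w.length, by rwa [List.take_length]⟩
  set n := Nat.find hex with hn_def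
  have hn_spec : ¬ IsGeodesic X (w.take n) := Nat.find_spec hex
  have hmin : ∀ s, s < n → IsGeodesic X (w.take s) := fun s hs =>
    not_not.mp (Nat.find_min hex hs)
  have hn_le : n ≤ w.length := Nat.find_min' hex (by rwa [List.take_length])
  have hn_pos : 1 ≤ n := by
    rcases Nat.eq_zero_or_pos n with h0 | h
    · exfalso
      apply hn_spec
      rw [h0]
      exact ⟨fun x hx => absurd hx List.not_mem_nil, by simp [wordDist_self]⟩
    · exact h
  set p := w.take n with hp_def
  have hp_len : p.length = n := by rw [hp_def, List.length_take]; omega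
  have hp_word : IsWord X p := fun x hx => hw x (List.mem_of_mem_take hx)
  obtain ⟨q, hq_word, hq_prod, hq_len, φ, hφmono, hφunb, hφ⟩ := H p hp_word hn_spec
  rw [hp_len] at hq_len
  -- geodesic prefixes give exact distances
  have hgeo : ∀ s, s < n → wordDist X 1 (wordPath w s) = s := by
    intro s hs
    have hiq := (hmin s hs).2
    rw [List.length_take] at hiq
    have hmin' : min s w.length = s := by omega
    rw [hmin'] at hiq
    exact hiq.symm
  -- n ≤ d(1, p.prod) + 2
  have hDp : n ≤ wordDist X 1 p.prod + 2 := by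
    have h1 : wordDist X 1 (wordPath w (n - 1)) = n - 1 := hgeo (n - 1) (by omega)
    have h2 : wordDist X (wordPath w (n - 1)) (wordPath w n) ≤ n - (n - 1) :=
      wordPath_sub hw (by omega)
    have h3 := dtri 1 (wordPath w n) (wordPath w (n - 1))
    have h4 : wordDist X (wordPath w n) (wordPath w (n - 1))
        = wordDist X (wordPath w (n - 1)) (wordPath w n) := dsym _ _
    have h5 : wordDist X 1 p.prod = wordDist X 1 (wordPath w n) := rfl
    omega
  have hDq : n ≤ wordDist X 1 q.prod + 2 := by rw [hq_prod]; exact hDp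
  have hq_ge : n ≤ q.length + 2 := by
    have := wordDist_le' (g := (1 : G)) (h := q.prod) hq_word (by simp)
    omega
  -- bounds on d(1, p(s))
  have hBup : ∀ s, wordDist X 1 (wordPath p s) ≤ min s n := by
    intro s
    rw [hp_def, wordPath_take]
    have := wordDist_one_path hw (min s n)
    omega
  have hBlo : ∀ s, min s n ≤ wordDist X 1 (wordPath p s) + 2 := by
    intro s
    rw [hp_def, wordPath_take]
    rcases lt_or_ge (min s n) n with hlt | hge
    · rw [hgeo _ hlt]; omega
    · have hmn : min s n = n := by omega
      rw [hmn]
      have hpp : wordDist X 1 p.prod = wordDist X 1 (wordPath w n) := rfl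
      omega
  -- lower bound on d(1, q(t))
  have hC : ∀ t, t ≤ q.length → t ≤ wordDist X 1 (wordPath q t) + 1 := by
    intro t ht
    have h1 : wordDist X (wordPath q t) (wordPath q q.length) ≤ q.length - t :=
      wordPath_sub hq_word ht
    have h2 : wordPath q q.length = q.prod := wordPath_of_length_le le_rfl
    rw [h2] at h1
    have h3 := dtri 1 (wordPath q t) q.prod
    omega
  -- the candidate word
  set u := q ++ w.drop n with hu_def
  have hu_word : IsWord X u := by
    intro x hx
    rw [hu_def] at hx
    rcases List.mem_append.mp hx with hx | hx
    · exact hq_word x hx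
    · exact hw x (List.mem_of_mem_drop hx)
  have hu_prod : u.prod = w.prod := by
    rw [hu_def, List.prod_append, hq_prod, hp_def, ← List.prod_append,
      List.take_append_drop]
  have hu_len : u.length < w.length := by
    rw [hu_def, List.length_append, List.length_drop]; omega
  have hdrop_word : IsWord X (w.drop n) := fun x hx => hw x (List.mem_of_mem_drop hx)
  have hu_path : ∀ t, wordPath u t
      = wordPath q t * wordPath (w.drop n) (t - q.length) := by
    intro t
    rw [hu_def]
    exact wordPath_append _ _ _
  have hsync : SyncFellowTravel X (4 * k) u w := by
    intro t
    rcases le_or_gt t q.length with ht | ht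
    · -- main zone : t ≤ |q|
      have hu : wordPath u t = wordPath q t := by
        rw [hu_path t]
        have h0 : t - q.length = 0 := by omega
        rw [h0, wordPath_zero, mul_one]
      rw [hu]
      set s := min (φ t) n with hs_def
      have hps : wordPath p (φ t) = wordPath w s := by
        rw [hp_def, wordPath_take]
      have hasync := hφ t
      have ha_up : wordDist X 1 (wordPath q t) ≤ t := wordDist_one_path hq_word t
      have ha_lo : t ≤ wordDist X 1 (wordPath q t) + 1 := hC t ht
      have hb_up := hBup (φ t)
      have hb_lo := hBlo (φ t)
      have h1 := dtri 1 (wordPath p (φ t)) (wordPath q t)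
      have h2 := dtri 1 (wordPath q t) (wordPath p (φ t))
      have hsymqp : wordDist X (wordPath q t) (wordPath p (φ t))
          = wordDist X (wordPath p (φ t)) (wordPath q t) := dsym _ _
      have hleg1 : wordDist X (wordPath q t) (wordPath w s) ≤ k := by
        rw [← hps]; exact hasync
      have hst : wordDist X (wordPath w s) (wordPath w t) ≤ k + 2 := by
        rcases le_or_gt s t with h | h
        · have h' := wordPath_sub hw h
          omega
        · have h' := wordPath_sub hw h.le
          have h'' : wordDist X (wordPath w s) (wordPath w t)
              = wordDist X (wordPath w t) (wordPath w s) := dsym _ _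
          omega
      have hfin := dtri (wordPath q t) (wordPath w s) (wordPath w t)
      omega
    · rcases le_or_gt t n with htn | htn
      · -- middle zone : |q| < t ≤ n
        have e1 : wordPath u q.length = q.prod := by
          rw [hu_path q.length, wordPath_of_length_le le_rfl, Nat.sub_self,
            wordPath_zero, mul_one]
        have h1 : wordDist X (wordPath u q.length) (wordPath u t) ≤ t - q.length :=
          wordPath_sub hu_word ht.le
        have h2 : wordDist X (wordPath w t) (wordPath w n) ≤ n - t :=
          wordPath_sub hw htn
        have h3 := dtri (wordPath u t) (wordPath u q.length) (wordPath w t)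
        have e4 : wordDist X (wordPath u q.length) (wordPath w t)
            = wordDist X (wordPath w t) (wordPath w n) := by
          rw [e1, hq_prod]
          have hpp : (p.prod : G) = wordPath w n := rfl
          rw [hpp, dsym]
        have e5 : wordDist X (wordPath u t) (wordPath u q.length)
            = wordDist X (wordPath u q.length) (wordPath u t) := dsym _ _
        omega
      · -- high zone : t > n
        have e1 : wordPath u t = p.prod * wordPath (w.drop n) (t - q.length) := by
          rw [hu_path t, wordPath_of_length_le (by omega : q.length ≤ t), hq_prod]
        have e2 : wordPath w t = p.prod * wordPath (w.drop n) (t - n) := by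
          have hsplit : w = p ++ w.drop n := by rw [hp_def, List.take_append_drop]
          calc wordPath w t = wordPath (p ++ w.drop n) t := by rw [← hsplit]
            _ = wordPath p t * wordPath (w.drop n) (t - p.length) :=
                wordPath_append _ _ _
            _ = p.prod * wordPath (w.drop n) (t - n) := by
                rw [wordPath_of_length_le (by omega), hp_len]
        rw [e1, e2, wordDist_left_inv]
        have h1 : wordDist X (wordPath (w.drop n) (t - n))
            (wordPath (w.drop n) (t - q.length)) ≤ (t - q.length) - (t - n) :=
          wordPath_sub hdrop_word (by omega)
        have h2 : wordDist X (wordPath (w.drop n) (t - q.length))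
            (wordPath (w.drop n) (t - n))
            = wordDist X (wordPath (w.drop n) (t - n))
              (wordPath (w.drop n) (t - q.length)) := dsym _ _
        omega
  exact ⟨u, hu_word, hu_prod, hu_len, hsync⟩

end FFTPAux

/-- The asynchronous and synchronous falsification by fellow
traveler properties are equivalent; moreover the asynchronous property with
constant `k ≥ 1` implies the synchronous property with constant `4k`. -/
theorem async_fftp_iff_sync_fftp {G : Type*} [Group G]
    (X : Finset G) (hXsym : ∀ x ∈ X, x⁻¹ ∈ X)
    (hXgen : Subgroup.closure (X : Set G) = ⊤) :
    ((∃ k : ℕ, AsyncFFTP X k) ↔ (∃ k : ℕ, SyncFFTP X k)) ∧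
      (∀ k : ℕ, 1 ≤ k → AsyncFFTP X k → SyncFFTP X (4 * k)) := by
  constructor
  · constructor
    · rintro ⟨k, hk⟩
      refine ⟨4 * max k 1, sync_of_async hXsym hXgen (le_max_right k 1) ?_⟩
      intro w hw hng
      obtain ⟨u, h1, h2, h3, φ, h4, h5, h6⟩ := hk w hw hng
      exact ⟨u, h1, h2, h3, φ, h4, h5, fun t => le_trans (h6 t) (le_max_left k 1)⟩
    · rintro ⟨k, hk⟩
      refine ⟨k, ?_⟩
      intro w hw hng
      obtain ⟨u, h1, h2, h3, h4⟩ := hk w hw hng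
      exact ⟨u, h1, h2, h3, id, monotone_id, fun N => ⟨N, le_rfl⟩, fun t => h4 t⟩
  · intro k hk H
    exact sync_of_async hXsym hXgen hk H
end

section
/- Let G be a group with finite symmetric generating set X, and suppose (G,X) has the falsification by fellow traveler property with constant k. Then G is finitely presented; more precisely, the kernel of the canonical surjection from the free group F(X) onto G is the normal closure in F(X) of the (finite) set of elements represented by words over X of length at most 2k+2 whose image in G is the identity. -/
namespace FFTPAux

variable {G : Type*} [Group G]

variable (X : Finset G)

abbrev A := {x : G // x ∈ X}

/-- The free-group element determined by a word over the generators. -/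
def pw (w : List (A X)) : FreeGroup (A X) := (w.map FreeGroup.of).prod

lemma pw_append (u v : List (A X)) : pw X (u ++ v) = pw X u * pw X v := by
  simp [pw]

/-- The set of short relators. -/
def relS (k : ℕ) : Set (FreeGroup (A X)) :=
  { r : FreeGroup (A X) |
      ∃ w : List (A X), w.length ≤ 2 * k + 2 ∧
        (w.map Subtype.val).prod = (1 : G) ∧
        (w.map FreeGroup.of).prod = r }

/-- Normal closure of the short relators. -/
def N (k : ℕ) : Subgroup (FreeGroup (A X)) := Subgroup.normalClosure (relS X k)

instance (k : ℕ) : (N X k).Normal := Subgroup.normalClosure_normal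

/-- Quotient map. -/
def q (k : ℕ) : FreeGroup (A X) →* FreeGroup (A X) ⧸ N X k := QuotientGroup.mk' (N X k)

lemma q_eq_one_iff {k : ℕ} (x : FreeGroup (A X)) : q X k x = 1 ↔ x ∈ N X k := by
  rw [q, QuotientGroup.mk'_apply, QuotientGroup.eq_one_iff]

lemma mem_rel {k : ℕ} (w : List (A X)) (h1 : w.length ≤ 2 * k + 2)
    (h2 : (w.map Subtype.val).prod = (1 : G)) : q X k (pw X w) = 1 := by
  rw [q, QuotientGroup.mk'_apply, QuotientGroup.eq_one_iff]
  exact Subgroup.subset_normalClosure ⟨w, h1, h2, rfl⟩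

/-- The formal inverse word. -/
def winv (hs : ∀ x ∈ X, x⁻¹ ∈ X) (w : List (A X)) : List (A X) :=
  w.reverse.map (fun x => ⟨x.1⁻¹, hs x.1 x.2⟩)

lemma winv_length (hs : ∀ x ∈ X, x⁻¹ ∈ X) (w : List (A X)) : (winv X hs w).length = w.length := by
  simp [winv]

lemma winv_valprod (hs : ∀ x ∈ X, x⁻¹ ∈ X) (w : List (A X)) :
    ((winv X hs w).map Subtype.val).prod = ((w.map Subtype.val).prod)⁻¹ := by
  induction w with
  | nil => simp [winv]
  | cons a t ih =>
      simp only [winv, List.reverse_cons, List.map_append, List.prod_append,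
        List.map_cons, List.map_nil, List.prod_cons, List.prod_nil, mul_inv_rev] at *
      rw [ih]; simp

lemma q_of_inv (hs : ∀ x ∈ X, x⁻¹ ∈ X) {k : ℕ} (a : A X) :
    q X k (FreeGroup.of (⟨a.1⁻¹, hs a.1 a.2⟩ : A X)) = (q X k (FreeGroup.of a))⁻¹ := by
  rw [eq_inv_iff_mul_eq_one, ← map_mul]
  have h : FreeGroup.of (⟨a.1⁻¹, hs a.1 a.2⟩ : A X) * FreeGroup.of a =
      pw X [⟨a.1⁻¹, hs a.1 a.2⟩, a] := by simp [pw]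
  rw [h]
  exact mem_rel X _ (by simp only [List.length_cons, List.length_nil]; omega) (by simp)

lemma q_winv (hs : ∀ x ∈ X, x⁻¹ ∈ X) {k : ℕ} (w : List (A X)) :
    q X k (pw X (winv X hs w)) = (q X k (pw X w))⁻¹ := by
  induction w with
  | nil => simp [winv, pw]
  | cons a t ih =>
      have h1 : winv X hs (a :: t) = winv X hs t ++ [(⟨a.1⁻¹, hs a.1 a.2⟩ : A X)] := by
        simp [winv]
      have h2 : pw X (a :: t) = FreeGroup.of a * pw X t := by simp [pw]
      have h3 : pw X [(⟨a.1⁻¹, hs a.1 a.2⟩ : A X)] = FreeGroup.of ⟨a.1⁻¹, hs a.1 a.2⟩ := by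
        simp [pw]
      rw [h1, pw_append, map_mul, ih, h2, map_mul, mul_inv_rev, h3, q_of_inv X hs]

lemma exists_word (hs : ∀ x ∈ X, x⁻¹ ∈ X) (hgen : Subgroup.closure (X : Set G) = ⊤) (g : G) : ∃ w : List (A X), (w.map Subtype.val).prod = g := by
  have hg : g ∈ Submonoid.closure ((X : Set G) ∪ (X : Set G)⁻¹) := by
    rw [← Subgroup.closure_toSubmonoid, hgen]
    exact Subgroup.mem_top g
  obtain ⟨l, hl, hp⟩ := Submonoid.exists_list_of_mem_closure hg
  have hl' : ∀ x ∈ l, x ∈ X := by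
    intro x hx
    rcases hl x hx with h | h
    · exact h
    · have := hs x⁻¹ (by simpa using h)
      simpa using this
  refine ⟨l.pmap (fun x h => (⟨x, h⟩ : A X)) hl', ?_⟩
  rw [List.map_pmap]
  simpa using hp

lemma exists_conn (hs : ∀ x ∈ X, x⁻¹ ∈ X) (hgen : Subgroup.closure (X : Set G) = ⊤) {k : ℕ} (g h : G) (hd : wordDist X g h ≤ k) :
    ∃ c : List (A X), c.length ≤ k ∧ (c.map Subtype.val).prod = g⁻¹ * h := by
  have hne : {n : ℕ | ∃ w : List G, IsWord X w ∧ w.length = n ∧ w.prod = g⁻¹ * h}.Nonempty := by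
    obtain ⟨w, hw⟩ := exists_word X hs hgen (g⁻¹ * h)
    refine ⟨(w.map Subtype.val).length, w.map Subtype.val, ?_, rfl, hw⟩
    intro x hx
    simp only [List.mem_map] at hx
    obtain ⟨a, _, rfl⟩ := hx
    exact a.2
  obtain ⟨w, hw, hlen, hprod⟩ := Nat.sInf_mem hne
  refine ⟨w.pmap (fun x h => (⟨x, h⟩ : A X)) hw, ?_, ?_⟩
  · rw [List.length_pmap (H := hw), hlen]; exact hd
  · rw [List.map_pmap (H := hw), List.pmap_eq_map (H := hw)]; simpa using hprod


lemma fellow (hs : ∀ x ∈ X, x⁻¹ ∈ X) (hgen : Subgroup.closure (X : Set G) = ⊤) {k : ℕ}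
    (u w : List (A X))
    (hprod : (u.map Subtype.val).prod = (w.map Subtype.val).prod)
    (hft : SyncFellowTravel X k (u.map Subtype.val) (w.map Subtype.val)) :
    q X k (pw X u) = q X k (pw X w) := by
  have hc : ∀ t : ℕ, ∃ c : List (A X), c.length ≤ k ∧
      (c.map Subtype.val).prod =
        (wordPath (u.map Subtype.val) t)⁻¹ * wordPath (w.map Subtype.val) t :=
    fun t => exists_conn X hs hgen _ _ (hft t)
  choose c hclen hcprod using hc
  have hpath : ∀ (l : List (A X)) (t : ℕ),
      wordPath (l.map Subtype.val) t = ((l.take t).map Subtype.val).prod := by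
    intro l t; rw [wordPath, List.map_take]
  have key : ∀ t : ℕ, q X k (pw X (u.take t)) * q X k (pw X (c t)) = q X k (pw X (w.take t)) := by
    intro t
    induction t with
    | zero =>
        simp only [List.take_zero]
        have h0 : q X k (pw X (c 0)) = 1 := by
          refine mem_rel X _ (le_trans (hclen 0) (by omega)) ?_
          have := hcprod 0
          simpa [wordPath] using this
        simpa [pw] using h0
    | succ t ih =>
        set bt : List (A X) := (u[t]?).toList with hbt
        set at' : List (A X) := (w[t]?).toList with hat
        have hut : u.take (t+1) = u.take t ++ bt := List.take_succ
        have hwt : w.take (t+1) = w.take t ++ at' := List.take_succ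
        have hbl : bt.length ≤ 1 := by cases h : u[t]? <;> simp [hbt, h]
        have hal : at'.length ≤ 1 := by cases h : w[t]? <;> simp [hat, h]
        -- path increments
        have hb : (bt.map Subtype.val).prod =
            (wordPath (u.map Subtype.val) t)⁻¹ * wordPath (u.map Subtype.val) (t+1) := by
          rw [hpath, hpath, hut, List.map_append, List.prod_append]
          group
        have ha : (at'.map Subtype.val).prod =
            (wordPath (w.map Subtype.val) t)⁻¹ * wordPath (w.map Subtype.val) (t+1) := by
          rw [hpath, hpath, hwt, List.map_append, List.prod_append]
          group
        -- the relator word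
        set d : List (A X) := bt ++ c (t+1) ++ winv X hs at' ++ winv X hs (c t) with hd
        have hdlen : d.length ≤ 2 * k + 2 := by
          have l1 := hclen (t+1); have l2 := hclen t
          have := winv_length X hs at'
          have := winv_length X hs (c t)
          simp only [hd, List.length_append]
          omega
        have hdprod : (d.map Subtype.val).prod = (1 : G) := by
          simp only [hd, List.map_append, List.prod_append, winv_valprod]
          rw [hb, ha, hcprod t, hcprod (t+1)]
          group
        have hqd : q X k (pw X d) = 1 := mem_rel X d hdlen hdprod
        have hq : q X k (pw X bt) * q X k (pw X (c (t+1))) =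
            q X k (pw X (c t)) * q X k (pw X at') := by
          have e : pw X d = pw X bt * pw X (c (t+1)) * pw X (winv X hs at') *
              pw X (winv X hs (c t)) := by
            simp only [hd, pw_append]
          rw [e, map_mul, map_mul, map_mul, q_winv X hs, q_winv X hs] at hqd
          have h2 : q X k (pw X (c t)) * q X k (pw X at') =
              (q X k (pw X bt) * q X k (pw X (c (t+1))) * (q X k (pw X at'))⁻¹ *
                (q X k (pw X (c t)))⁻¹) * (q X k (pw X (c t)) * q X k (pw X at')) := by
            rw [hqd, one_mul]
          rw [h2]
          group
        rw [hut, hwt, pw_append, pw_append, map_mul, map_mul, mul_assoc, hq,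
          ← mul_assoc, ih]
  have T := max u.length w.length
  have hT1 : u.take (max u.length w.length) = u := List.take_of_length_le (le_max_left _ _)
  have hT2 : w.take (max u.length w.length) = w := List.take_of_length_le (le_max_right _ _)
  have hcT : q X k (pw X (c (max u.length w.length))) = 1 := by
    refine mem_rel X _ (le_trans (hclen _) (by omega)) ?_
    rw [hcprod]
    rw [wordPath, wordPath, List.take_of_length_le (by simpa using le_max_left u.length w.length),
      List.take_of_length_le (by simpa using le_max_right u.length w.length), hprod]
    group
  have := key (max u.length w.length)
  rw [hT1, hT2, hcT, mul_one] at this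
  exact this

lemma lift_pw (w : List (A X)) :
    FreeGroup.lift (fun x : A X => (x : G)) (pw X w) = (w.map Subtype.val).prod := by
  rw [pw, map_list_prod, List.map_map]
  congr 1
  apply List.map_congr_left
  intro a _
  simp [FreeGroup.lift_apply_of]

lemma trivial_word (hs : ∀ x ∈ X, x⁻¹ ∈ X) (hgen : Subgroup.closure (X : Set G) = ⊤)
    {k : ℕ} (hfftp : SyncFFTP X k) :
    ∀ (n : ℕ) (w : List (A X)), w.length ≤ n → (w.map Subtype.val).prod = 1 →
      q X k (pw X w) = 1 := by
  intro n
  induction n with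
  | zero =>
      intro w hw _
      have : w = [] := List.eq_nil_of_length_eq_zero (by omega)
      subst this
      simp [pw]
  | succ n ih =>
      intro w hw hp
      rcases eq_or_ne w [] with h | h
      · subst h; simp [pw]
      · have hiw : IsWord X (w.map Subtype.val) := by
          intro x hx
          simp only [List.mem_map] at hx
          obtain ⟨a, _, rfl⟩ := hx
          exact a.2
        have hng : ¬ IsGeodesic X (w.map Subtype.val) := by
          rintro ⟨-, hlen⟩
          rw [hp] at hlen
          have h0 : wordDist X 1 (1 : G) = 0 := by
            refine Nat.sInf_eq_zero.mpr (Or.inl ?_)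
            exact ⟨[], fun x hx => absurd hx List.not_mem_nil, rfl, by simp⟩
          rw [h0, List.length_map] at hlen
          exact h (List.eq_nil_of_length_eq_zero hlen)
        obtain ⟨uG, huw, hup, hulen, hft⟩ := hfftp _ hiw hng
        set u : List (A X) := uG.pmap (fun x h => (⟨x, h⟩ : A X)) huw with hu
        have humap : u.map Subtype.val = uG := by
          rw [hu, List.map_pmap (H := huw), List.pmap_eq_map (H := huw)]
          simp
        have h1 : q X k (pw X u) = 1 := by
          refine ih u ?_ ?_
          · have : u.length = uG.length := by rw [hu, List.length_pmap (H := huw)]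
            rw [this]
            have := hulen
            rw [List.length_map] at this
            omega
          · rw [humap, hup, hp]
        have h2 : q X k (pw X u) = q X k (pw X w) := by
          refine fellow X hs hgen u w ?_ ?_
          · rw [humap, hup]
          · rw [humap]; exact hft
        rw [← h2]
        exact h1

end FFTPAux

open FFTPAux


/-- If `(G,X)` has the falsification by fellow traveler
property with constant `k`, then `G` is finitely presented: the kernel of the
canonical surjection `F(X) → G` is the normal closure of the (finite) set of
elements of `F(X)` represented by words over `X` of length at most `2k + 2`
whose image in `G` is the identity. -/
theorem fftp_implies_finitely_presented {G : Type*} [Group G]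
    (X : Finset G) (hXsym : ∀ x ∈ X, x⁻¹ ∈ X)
    (hXgen : Subgroup.closure (X : Set G) = ⊤)
    (k : ℕ) (hfftp : SyncFFTP X k) :
    ({ r : FreeGroup {x : G // x ∈ X} |
        ∃ w : List {x : G // x ∈ X}, w.length ≤ 2 * k + 2 ∧
          (w.map Subtype.val).prod = (1 : G) ∧
          (w.map FreeGroup.of).prod = r } : Set (FreeGroup {x : G // x ∈ X})).Finite ∧
    (FreeGroup.lift (fun x : {x : G // x ∈ X} => (x : G))).ker =
      Subgroup.normalClosure
        { r : FreeGroup {x : G // x ∈ X} |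
          ∃ w : List {x : G // x ∈ X}, w.length ≤ 2 * k + 2 ∧
            (w.map Subtype.val).prod = (1 : G) ∧
            (w.map FreeGroup.of).prod = r } := by
  classical
  constructor
  · -- finiteness
    have hfin : Finite (A X) := by infer_instance
    refine Set.Finite.subset
      (Set.Finite.image (fun w : List (A X) => (w.map FreeGroup.of).prod)
        (List.finite_length_le (A X) (2 * k + 2))) ?_
    rintro r ⟨w, hl, -, hr⟩
    exact ⟨w, hl, hr⟩
  · have hEq : Subgroup.normalClosure
        { r : FreeGroup {x : G // x ∈ X} |
          ∃ w : List {x : G // x ∈ X}, w.length ≤ 2 * k + 2 ∧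
            (w.map Subtype.val).prod = (1 : G) ∧
            (w.map FreeGroup.of).prod = r } = N X k := rfl
    rw [hEq]
    have hNle : N X k ≤ (FreeGroup.lift (fun x : {x : G // x ∈ X} => (x : G))).ker := by
      apply Subgroup.normalClosure_le_normal
      rintro r ⟨w, -, hp, rfl⟩
      have : ((w.map FreeGroup.of).prod : FreeGroup (A X)) = pw X w := rfl
      rw [SetLike.mem_coe, MonoidHom.mem_ker, this, lift_pw, hp]
    refine le_antisymm ?_ hNle
    intro r hr
    have claim : ∀ r : FreeGroup (A X),
        ∃ w : List (A X), q X k (pw X w) = q X k r := by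
      intro r
      refine FreeGroup.induction_on r ⟨[], by simp [pw]⟩
        (fun x => ⟨[x], by simp [pw]⟩) (fun x hx => ?_) (fun x y hx hy => ?_)
      · obtain ⟨w, hw⟩ := hx
        exact ⟨winv X hXsym w, by rw [q_winv X hXsym, hw, map_inv]⟩
      · obtain ⟨w1, h1⟩ := hx
        obtain ⟨w2, h2⟩ := hy
        exact ⟨w1 ++ w2, by rw [pw_append, map_mul, h1, h2, map_mul]⟩
    obtain ⟨w, hwq⟩ := claim r
    have hm : (pw X w)⁻¹ * r ∈ N X k := by
      rw [← q_eq_one_iff, map_mul, map_inv, hwq]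
      group
    have hk := hNle hm
    rw [MonoidHom.mem_ker, map_mul, map_inv] at hk
    rw [MonoidHom.mem_ker] at hr
    rw [hr, mul_one, inv_eq_one, lift_pw] at hk
    have hq1 : q X k (pw X w) = 1 := trivial_word X hXsym hXgen hfftp w.length w le_rfl hk
    rw [hwq] at hq1
    rw [← q_eq_one_iff X r]
    exact hq1
end
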